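/- Let g be a nondegenerate symmetric bilinear form on ℝ⁴ with matrix (g_{ab}) and A a linear form with components A_a; write g(y,y) = Σ g_{ab}y^a y^b and A(y) = Σ A_a y^a. Define the Randers Lagrangian L(y) = (√(g(y,y)) + A(y))² on the open set {y : g(y,y) > 0}, and let g^L(y) be the 4×4 matrix with entries g^L_{ab}(y) = (1/2)∂²L/∂y^a∂y^b(y). Then for every y with g(y,y) > 0, det(g^L(y)) = det(g_{ab}) · (√(g(y,y)) + A(y))⁵ / (g(y,y))^{5/2}. -/

import Mathlib

noncomputable section

/-- The quadratic form `g(y,y) = Σ g_{ab} y^a y^b` of a 4×4 matrix. -/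
def quadForm (g : Matrix (Fin 4) (Fin 4) ℝ) (y : Fin 4 → ℝ) : ℝ :=
  ∑ a, ∑ b, g a b * y a * y b

/-- The linear form `A(y) = Σ A_a y^a`. -/
def linForm (A : Fin 4 → ℝ) (y : Fin 4 → ℝ) : ℝ := ∑ a, A a * y a

/-- The L-metric: the matrix `g^L_{ab}(y) = (1/2) ∂²L/∂y^a∂y^b (y)`. -/
def Lmetric (L : (Fin 4 → ℝ) → ℝ) (y : Fin 4 → ℝ) : Matrix (Fin 4) (Fin 4) ℝ :=
  Matrix.of fun a b =>
    (1 / 2) * fderiv ℝ (fun z => fderiv ℝ L z (Pi.single b 1)) y (Pi.single a 1)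

section Aux
open ContinuousLinearMap Matrix

/-- derivative of quadForm -/
def dQ (g : Matrix (Fin 4) (Fin 4) ℝ) (z : Fin 4 → ℝ) : (Fin 4 → ℝ) →L[ℝ] ℝ :=
  ∑ a, ∑ b, ((g a b * z a) • proj b + z b • (g a b • (proj a : (Fin 4 → ℝ) →L[ℝ] ℝ)))

def dL (A : Fin 4 → ℝ) : (Fin 4 → ℝ) →L[ℝ] ℝ :=
  ∑ a, A a • (proj a : (Fin 4 → ℝ) →L[ℝ] ℝ)

def dMV (g : Matrix (Fin 4) (Fin 4) ℝ) (b : Fin 4) : (Fin 4 → ℝ) →L[ℝ] ℝ :=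
  ∑ c, g b c • (proj c : (Fin 4 → ℝ) →L[ℝ] ℝ)

lemma hasFDerivAt_quadForm (g : Matrix (Fin 4) (Fin 4) ℝ) (z : Fin 4 → ℝ) :
    HasFDerivAt (quadForm g) (dQ g z) z := by
  apply HasFDerivAt.fun_sum
  intro a _
  apply HasFDerivAt.fun_sum
  intro b _
  exact ((hasFDerivAt_apply a z).const_mul (g a b)).mul (hasFDerivAt_apply b z)

lemma hasFDerivAt_linForm (A : Fin 4 → ℝ) (z : Fin 4 → ℝ) :
    HasFDerivAt (linForm A) (dL A) z := by
  apply HasFDerivAt.fun_sum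
  intro a _
  exact (hasFDerivAt_apply a z).const_mul (A a)

lemma hasFDerivAt_mulVec (g : Matrix (Fin 4) (Fin 4) ℝ) (b : Fin 4) (z : Fin 4 → ℝ) :
    HasFDerivAt (fun z => g.mulVec z b) (dMV g b) z := by
  have : (fun z : Fin 4 → ℝ => g.mulVec z b) = fun z => ∑ c, g b c * z c := by
    ext z; simp [Matrix.mulVec, dotProduct]
  rw [this]
  apply HasFDerivAt.fun_sum
  intro c _
  exact (hasFDerivAt_apply c z).const_mul (g b c)

@[simp] lemma dQ_apply (g : Matrix (Fin 4) (Fin 4) ℝ) (hgs : g.IsSymm) (z : Fin 4 → ℝ) (c : Fin 4) :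
    dQ g z (Pi.single c 1) = 2 * g.mulVec z c := by
  have hs : ∀ a b, g a b = g b a := fun a b => (hgs.apply a b).symm
  simp only [dQ, ContinuousLinearMap.sum_apply, ContinuousLinearMap.add_apply,
    ContinuousLinearMap.smul_apply, proj_apply, smul_eq_mul]
  simp only [Pi.single_apply, mul_ite, mul_one, mul_zero, Finset.sum_add_distrib,
    Finset.sum_ite_eq, Finset.sum_ite_eq', Finset.mem_univ, if_true]
  simp [Matrix.mulVec, dotProduct, Finset.mul_sum, mul_comm, hs]
  rw [← Finset.sum_add_distrib]; exact Finset.sum_congr rfl fun x _ => by ring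

@[simp] lemma dL_apply (A : Fin 4 → ℝ) (c : Fin 4) : dL A (Pi.single c 1) = A c := by
  simp [dL, Pi.single_apply]

@[simp] lemma dMV_apply (g : Matrix (Fin 4) (Fin 4) ℝ) (b c : Fin 4) :
    dMV g b (Pi.single c 1) = g b c := by
  simp [dMV, Pi.single_apply]

def Gfun (g : Matrix (Fin 4) (Fin 4) ℝ) (A : Fin 4 → ℝ) (b : Fin 4) (z : Fin 4 → ℝ) : ℝ :=
  2 * (Real.sqrt (quadForm g z) + linForm A z) *
    (g.mulVec z b * (Real.sqrt (quadForm g z))⁻¹ + A b)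

lemma continuous_quadForm (g : Matrix (Fin 4) (Fin 4) ℝ) : Continuous (quadForm g) := by
  unfold quadForm; continuity

lemma isOpen_timelike (g : Matrix (Fin 4) (Fin 4) ℝ) :
    IsOpen {z : Fin 4 → ℝ | 0 < quadForm g z} :=
  isOpen_lt continuous_const (continuous_quadForm g)

lemma hasFDerivAt_sqrtQ (g : Matrix (Fin 4) (Fin 4) ℝ) {z : Fin 4 → ℝ}
    (hz : 0 < quadForm g z) :
    HasFDerivAt (fun z => Real.sqrt (quadForm g z))
      ((1 / (2 * Real.sqrt (quadForm g z))) • dQ g z) z :=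
  (Real.hasDerivAt_sqrt hz.ne').comp_hasFDerivAt z (hasFDerivAt_quadForm g z)

lemma fderiv_L_apply (g : Matrix (Fin 4) (Fin 4) ℝ) (hgs : g.IsSymm) (A : Fin 4 → ℝ)
    (L : (Fin 4 → ℝ) → ℝ)
    (hLdef : ∀ y : Fin 4 → ℝ, 0 < quadForm g y →
      L y = (Real.sqrt (quadForm g y) + linForm A y) ^ 2)
    {z : Fin 4 → ℝ} (hz : 0 < quadForm g z) (b : Fin 4) :
    fderiv ℝ L z (Pi.single b 1) = Gfun g A b z := by
  set F : (Fin 4 → ℝ) → ℝ := fun z => (Real.sqrt (quadForm g z) + linForm A z) ^ 2 with hF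
  have hLF : L =ᶠ[nhds z] F :=
    Filter.eventually_of_mem ((isOpen_timelike g).mem_nhds hz) fun w hw => hLdef w hw
  have hs : Real.sqrt (quadForm g z) ≠ 0 := (Real.sqrt_pos.2 hz).ne'
  have hφ : HasFDerivAt (fun z => Real.sqrt (quadForm g z) + linForm A z)
      ((1 / (2 * Real.sqrt (quadForm g z))) • dQ g z + dL A) z :=
    (hasFDerivAt_sqrtQ g hz).add (hasFDerivAt_linForm A z)
  have hFeq : F = fun z => (Real.sqrt (quadForm g z) + linForm A z) *
      (Real.sqrt (quadForm g z) + linForm A z) := by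
    ext w; rw [hF]; ring
  have hFd : HasFDerivAt F
      ((Real.sqrt (quadForm g z) + linForm A z) •
          ((1 / (2 * Real.sqrt (quadForm g z))) • dQ g z + dL A) +
        (Real.sqrt (quadForm g z) + linForm A z) •
          ((1 / (2 * Real.sqrt (quadForm g z))) • dQ g z + dL A)) z := by
    rw [hFeq]; exact hφ.mul hφ
  rw [hLF.fderiv_eq, hFd.fderiv]
  simp only [ContinuousLinearMap.smul_apply, ContinuousLinearMap.add_apply,
    ContinuousLinearMap.smul_apply, smul_eq_mul, dQ_apply g hgs, dL_apply, Gfun, pow_one,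
    Nat.cast_ofNat]
  field_simp
  ring

lemma lmetric_eq (g : Matrix (Fin 4) (Fin 4) ℝ) (hgs : g.IsSymm) (A : Fin 4 → ℝ)
    (L : (Fin 4 → ℝ) → ℝ)
    (hLdef : ∀ y : Fin 4 → ℝ, 0 < quadForm g y →
      L y = (Real.sqrt (quadForm g y) + linForm A y) ^ 2)
    {y : Fin 4 → ℝ} (hy : 0 < quadForm g y) :
    Lmetric L y = Matrix.of fun a b =>
      (g.mulVec y a / Real.sqrt (quadForm g y) + A a) *
        (g.mulVec y b / Real.sqrt (quadForm g y) + A b) +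
      (Real.sqrt (quadForm g y) + linForm A y) *
        (g a b / Real.sqrt (quadForm g y) -
          g.mulVec y a * g.mulVec y b / Real.sqrt (quadForm g y) ^ 3) := by
  ext a b
  have hs : Real.sqrt (quadForm g y) ≠ 0 := (Real.sqrt_pos.2 hy).ne'
  have hev : (fun z => fderiv ℝ L z (Pi.single b 1)) =ᶠ[nhds y] Gfun g A b :=
    Filter.eventually_of_mem ((isOpen_timelike g).mem_nhds hy) fun w hw =>
      fderiv_L_apply g hgs A L hLdef hw b
  have hφ : HasFDerivAt (fun z => Real.sqrt (quadForm g z) + linForm A z)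
      ((1 / (2 * Real.sqrt (quadForm g y))) • dQ g y + dL A) y :=
    (hasFDerivAt_sqrtQ g hy).add (hasFDerivAt_linForm A y)
  have hu : HasFDerivAt (fun z => 2 * (Real.sqrt (quadForm g z) + linForm A z))
      ((2:ℝ) • ((1 / (2 * Real.sqrt (quadForm g y))) • dQ g y + dL A)) y := hφ.const_mul 2
  have hinv : HasFDerivAt (fun z => (Real.sqrt (quadForm g z))⁻¹)
      ((-(Real.sqrt (quadForm g y) ^ 2)⁻¹) •
        ((1 / (2 * Real.sqrt (quadForm g y))) • dQ g y)) y :=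
    (hasDerivAt_inv hs).comp_hasFDerivAt y (hasFDerivAt_sqrtQ g hy)
  have hw1 : HasFDerivAt (fun z => g.mulVec z b * (Real.sqrt (quadForm g z))⁻¹)
      ((g.mulVec y b) • ((-(Real.sqrt (quadForm g y) ^ 2)⁻¹) •
          ((1 / (2 * Real.sqrt (quadForm g y))) • dQ g y)) +
        (Real.sqrt (quadForm g y))⁻¹ • dMV g b) y :=
    (hasFDerivAt_mulVec g b y).mul hinv
  have hw2 := hw1.add_const (A b)
  have hG : HasFDerivAt (Gfun g A b) _ y := hu.mul hw2
  rw [Lmetric, Matrix.of_apply, hev.fderiv_eq, hG.fderiv]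
  have hgab : g b a = g a b := hgs.apply a b
  simp only [ContinuousLinearMap.add_apply, ContinuousLinearMap.smul_apply,
    ContinuousLinearMap.sub_apply, smul_eq_mul, dQ_apply g hgs, dL_apply, dMV_apply, hgab]
  set s := Real.sqrt (quadForm g y) with hs_def
  simp only [Matrix.of_apply]
  field_simp
  ring

lemma detH (g : Matrix (Fin 4) (Fin 4) ℝ) (hgs : g.IsSymm) (hgdet : g.det ≠ 0)
    (A y : Fin 4 → ℝ) (s : ℝ) (hs : 0 < s)
    (hsq : s ^ 2 = ∑ a, ∑ b, g a b * y a * y b) :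
    (Matrix.of fun a b =>
      (g.mulVec y a / s + A a) * (g.mulVec y b / s + A b) +
      (s + (∑ a, A a * y a)) *
        (g a b / s - g.mulVec y a * g.mulVec y b / s ^ 3)).det =
      g.det * (s + (∑ a, A a * y a)) ^ 5 / s ^ 5 := by
  have hgu : IsUnit g.det := isUnit_iff_ne_zero.2 hgdet
  set p : ℝ := ∑ a, A a * y a with hp
  set v : Fin 4 → ℝ := g.mulVec y with hv
  set w : Fin 4 → ℝ := fun a => v a / s + A a with hw
  -- basic dot product facts
  have fact1 : ∑ k, v k * y k = s ^ 2 := by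
    rw [hsq, hv]
    simp only [Matrix.mulVec, dotProduct]
    simp only [Finset.sum_mul, Finset.mul_sum]
    exact Finset.sum_congr rfl fun a _ => Finset.sum_congr rfl fun b _ => by ring
  have fact4 : ∑ k, w k * y k = s + p := by
    simp only [hw, add_mul, Finset.sum_add_distrib, div_mul_eq_mul_div, ← Finset.sum_div, fact1]
    field_simp
    ring
  have fact2 : g⁻¹ *ᵥ v = y := by
    rw [hv, Matrix.mulVec_mulVec, Matrix.nonsing_inv_mul g hgu, Matrix.one_mulVec]
  have fact3 : ∑ k, v k * (g⁻¹ *ᵥ A) k = p := by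
    have h1 : ∑ k, v k * (g⁻¹ *ᵥ A) k = v ⬝ᵥ (g⁻¹ *ᵥ A) := rfl
    rw [h1, dotProduct_mulVec]
    have h2 : v ᵥ* g⁻¹ = y := by
      have hvm : v = y ᵥ* g := by
        rw [hv, ← Matrix.mulVec_transpose, hgs.eq]
      rw [hvm, Matrix.vecMul_vecMul, Matrix.mul_nonsing_inv g hgu, Matrix.vecMul_one]
    rw [h2]
    rw [hp]
    simp [dotProduct, mul_comm]
  rcases eq_or_ne (s + p) 0 with hsp | hsp
  · -- degenerate case: rank one, det = 0 on both sides
    have hy0 : y ≠ 0 := by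
      intro h
      rw [h] at fact1
      simp at fact1
      exact (by positivity : (0:ℝ) < s ^ 2).ne' (by rw [← fact1])
    have hker : (Matrix.of fun a b =>
        (g.mulVec y a / s + A a) * (g.mulVec y b / s + A b) +
        (s + (∑ a, A a * y a)) *
          (g a b / s - g.mulVec y a * g.mulVec y b / s ^ 3)) *ᵥ y = 0 := by
      ext a
      simp only [Matrix.mulVec, dotProduct, Matrix.of_apply, Pi.zero_apply]
      rw [show s + (∑ a, A a * y a) = s + p from rfl, hsp]
      simp only [zero_mul, add_zero]
      have h5 : ∀ b : Fin 4, ((∑ x, g a x * y x) / s + A a) * ((∑ x, g b x * y x) / s + A b) * y b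
          = w a * (w b * y b) := fun b => by
        simp only [hw, hv, Matrix.mulVec, dotProduct]; ring
      rw [Finset.sum_congr rfl fun b _ => h5 b, ← Finset.mul_sum, fact4, hsp, mul_zero]
    have hdet0 := Matrix.exists_mulVec_eq_zero_iff.mp ⟨y, hy0, hker⟩
    rw [hdet0, show s + (∑ a, A a * y a) = s + p from rfl, hsp]
    simp
  · -- main case
    set α : ℝ := (s + p) / s with hα
    set c : ℝ := (s + p) / s ^ 3 with hc
    have hα0 : α ≠ 0 := div_ne_zero hsp hs.ne'
    set B : Matrix (Fin 4) (Fin 2) ℝ := Matrix.of fun a i => ![w a, v a] i with hB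
    set C : Matrix (Fin 2) (Fin 4) ℝ := Matrix.of fun i b => ![w b, -c * v b] i with hC
    set D : Matrix (Fin 4) (Fin 2) ℝ := α⁻¹ • (g⁻¹ * B) with hD
    have hH : (Matrix.of fun a b =>
        (g.mulVec y a / s + A a) * (g.mulVec y b / s + A b) +
        (s + (∑ a, A a * y a)) *
          (g a b / s - g.mulVec y a * g.mulVec y b / s ^ 3))
        = g * (α • 1 + g⁻¹ * (B * C)) := by
      rw [Matrix.mul_add, Matrix.mul_smul, Matrix.mul_one, ← Matrix.mul_assoc,
        Matrix.mul_nonsing_inv g hgu, Matrix.one_mul]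
      ext a b
      simp only [Matrix.of_apply, Matrix.add_apply, Matrix.smul_apply, smul_eq_mul,
        Matrix.mul_apply, Fin.sum_univ_two, hB, hC, Matrix.cons_val_zero, Matrix.cons_val_one,
        Matrix.head_cons, hα, hc, hw, hv, hp]
      field_simp
      ring
    -- column computations
    have hcol1 : ∀ k, (g⁻¹ * B) k 1 = y k := by
      intro k
      rw [← fact2]
      simp [Matrix.mul_apply, Matrix.mulVec, dotProduct, hB]
    have hcol0 : ∀ k, (g⁻¹ * B) k 0 = y k / s + (g⁻¹ *ᵥ A) k := by
      intro k
      rw [← fact2]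
      simp only [Matrix.mul_apply, Matrix.mulVec, dotProduct, hB, Matrix.of_apply,
        Matrix.cons_val_zero, hw, mul_add, Finset.sum_add_distrib, mul_div_assoc',
        ← Finset.sum_div]
    have hvcol0 : ∑ k, v k * (g⁻¹ * B) k 0 = s + p := by
      rw [Finset.sum_congr rfl fun k _ => by rw [hcol0 k]]
      simp only [mul_add, Finset.sum_add_distrib, mul_div_assoc', ← Finset.sum_div, fact1, fact3]
      field_simp
    have hwcol1 : ∑ k, w k * (g⁻¹ * B) k 1 = s + p := by
      rw [Finset.sum_congr rfl fun k _ => by rw [hcol1 k]]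
      exact fact4
    have hvcol1 : ∑ k, v k * (g⁻¹ * B) k 1 = s ^ 2 := by
      rw [Finset.sum_congr rfl fun k _ => by rw [hcol1 k]]
      exact fact1
    -- the 2×2 determinant
    have hsplit : α • 1 + g⁻¹ * (B * C) = α • (1 + D * C) := by
      rw [smul_add, hD, Matrix.smul_mul, smul_smul, mul_inv_cancel₀ hα0, one_smul,
        Matrix.mul_assoc]
    have hE11 : ((1 : Matrix (Fin 2) (Fin 2) ℝ) + C * D) 1 1 = 0 := by
      simp only [Matrix.add_apply, Matrix.one_apply_eq]
      rw [Matrix.mul_apply]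
      simp only [hD, Matrix.smul_apply, smul_eq_mul, hC, Matrix.of_apply,
        Matrix.cons_val_one, Matrix.head_cons, Matrix.cons_val_zero]
      rw [show (∑ k, -c * v k * (α⁻¹ * (g⁻¹ * B) k 1)) = ∑ k, -(c * α⁻¹) * (v k * (g⁻¹ * B) k 1) from Finset.sum_congr rfl fun k _ => by ring]
      rw [← Finset.mul_sum, hvcol1, hα, hc]
      field_simp
      ring
    have hE01 : ((1 : Matrix (Fin 2) (Fin 2) ℝ) + C * D) 0 1 = s := by
      simp only [Matrix.add_apply, Matrix.one_apply, if_neg (by decide : ¬(0:Fin 2) = 1)]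
      rw [Matrix.mul_apply]
      simp only [hD, Matrix.smul_apply, smul_eq_mul, hC, Matrix.of_apply, Matrix.cons_val_zero]
      rw [show (∑ k, w k * (α⁻¹ * (g⁻¹ * B) k 1)) = ∑ k, α⁻¹ * (w k * (g⁻¹ * B) k 1) from Finset.sum_congr rfl fun k _ => by ring]
      rw [← Finset.mul_sum, hwcol1, hα]
      field_simp
      ring
    have hE10 : ((1 : Matrix (Fin 2) (Fin 2) ℝ) + C * D) 1 0 = -(c * α⁻¹ * (s + p)) := by
      simp only [Matrix.add_apply, Matrix.one_apply, if_neg (by decide : ¬(1:Fin 2) = 0)]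
      rw [Matrix.mul_apply]
      simp only [hD, Matrix.smul_apply, smul_eq_mul, hC, Matrix.of_apply,
        Matrix.cons_val_one, Matrix.head_cons, Matrix.cons_val_zero]
      rw [show (∑ k, -c * v k * (α⁻¹ * (g⁻¹ * B) k 0)) = ∑ k, -(c * α⁻¹) * (v k * (g⁻¹ * B) k 0) from Finset.sum_congr rfl fun k _ => by ring]
      rw [← Finset.mul_sum, hvcol0]
      ring
    have hdet2 : ((1 : Matrix (Fin 2) (Fin 2) ℝ) + C * D).det = α := by
      rw [Matrix.det_fin_two, hE11, hE01, hE10, mul_zero, zero_sub, hα, hc]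
      field_simp
    rw [hH, Matrix.det_mul, hsplit, Matrix.det_smul, Matrix.det_one_add_mul_comm D C, hdet2,
      Fintype.card_fin]
    rw [hα, hp]
    field_simp

end Aux

/-- Determinant of the L-metric of the Randers Lagrangian
`L = (√(g(y,y)) + A(y))²` on the set of `g`-timelike vectors:
`det g^L = det g · (√(g(y,y)) + A(y))⁵ / g(y,y)^{5/2}`. -/
theorem randers_det_timelike (g : Matrix (Fin 4) (Fin 4) ℝ) (hgs : g.IsSymm)
    (hgdet : g.det ≠ 0) (A : Fin 4 → ℝ) (L : (Fin 4 → ℝ) → ℝ)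
    (hLdef : ∀ y : Fin 4 → ℝ, 0 < quadForm g y →
      L y = (Real.sqrt (quadForm g y) + linForm A y) ^ 2) :
    ∀ y : Fin 4 → ℝ, 0 < quadForm g y →
      (Lmetric L y).det =
        g.det * (Real.sqrt (quadForm g y) + linForm A y) ^ 5 /
          (quadForm g y) ^ ((5 : ℝ) / 2) := by
  intro y hy
  have hs0 : 0 < Real.sqrt (quadForm g y) := Real.sqrt_pos.2 hy
  have hsq : Real.sqrt (quadForm g y) ^ 2 = ∑ a, ∑ b, g a b * y a * y b := by
    rw [Real.sq_sqrt hy.le]; rfl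
  rw [lmetric_eq g hgs A L hLdef hy]
  have h := detH g hgs hgdet A y (Real.sqrt (quadForm g y)) hs0 hsq
  have hlin : linForm A y = ∑ a, A a * y a := rfl
  rw [hlin, h]
  have hrp : (quadForm g y) ^ ((5:ℝ)/2) = Real.sqrt (quadForm g y) ^ 5 := by
    rw [Real.sqrt_eq_rpow, ← Real.rpow_natCast (quadForm g y ^ ((1:ℝ)/2)) 5,
      ← Real.rpow_mul hy.le]
    norm_num
  rw [hrp]
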